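/- arXiv:1401.2707 — 2 statements merged into one kernel-verified Lean document; each statement's English description precedes it below -/
import Mathlib

section
/- For integers n and m with 1 ≤ m and 2m ≤ n, the number of simple graphs on the vertex set {1,…,n} having exactly m connected components, each of which is a path on at least 2 vertices, equals C(n−m−1, m−1) · n!/(m!·2^m), where C(·,·) is the binomial coefficient. -/
/-- The connected component `c` of `G` is a path on at least 2 vertices: its vertices can
be listed as `v₁,…,v_ℓ` (`ℓ ≥ 2`) with the adjacencies among them exactly
`{v_i, v_{i+1}}` for `1 ≤ i < ℓ`. -/
def IsPathComponent {V : Type*} (G : SimpleGraph V) (c : G.ConnectedComponent) : Prop :=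
  ∃ (ℓ : ℕ) (v : Fin ℓ → V), 2 ≤ ℓ ∧ Function.Injective v ∧ Set.range v = c.supp ∧
    ∀ a b : Fin ℓ, G.Adj (v a) (v b) ↔ ((a : ℕ) + 1 = b ∨ (b : ℕ) + 1 = a)

/-- `G` has exactly `m` connected components, each of which is a path on at least 2
vertices. -/
def PathsGraph {n : ℕ} (G : SimpleGraph (Fin n)) (m : ℕ) : Prop :=
  Nat.card G.ConnectedComponent = m ∧ ∀ c : G.ConnectedComponent, IsPathComponent G c

namespace PG9
open SimpleGraph

variable {V : Type*} {G : SimpleGraph V} {C : G.ConnectedComponent}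

/-- The body of `IsPathComponent`, with the data exposed. -/
def PS {V : Type*} (G : SimpleGraph V) (C : G.ConnectedComponent) (ℓ : ℕ) (v : Fin ℓ → V) :
    Prop :=
  2 ≤ ℓ ∧ Function.Injective v ∧ Set.range v = C.supp ∧
    ∀ a b : Fin ℓ, G.Adj (v a) (v b) ↔ ((a : ℕ) + 1 = b ∨ (b : ℕ) + 1 = a)

lemma isPathComponent_iff : IsPathComponent G C ↔ ∃ ℓ v, PS G C ℓ v := Iff.rfl

variable {ℓ ℓ' : ℕ} {v : Fin ℓ → V} {v' : Fin ℓ' → V}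

lemma PS.mk_eq (h : PS G C ℓ v) (a : Fin ℓ) : G.connectedComponentMk (v a) = C := by
  have : v a ∈ C.supp := h.2.2.1 ▸ Set.mem_range_self a
  exact this

lemma PS.len (h : PS G C ℓ v) : ℓ = Nat.card C.supp := by
  calc ℓ = Nat.card (Fin ℓ) := by simp
    _ = Nat.card (Set.range v) := Nat.card_congr (Equiv.ofInjective v h.2.1)
    _ = Nat.card C.supp := by rw [h.2.2.1]

lemma PS.rev (h : PS G C ℓ v) :
    PS G C ℓ (fun a => v ⟨ℓ - 1 - (a : ℕ), by have := a.isLt; omega⟩) := by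
  obtain ⟨h2, hinj, hrange, hadj⟩ := h
  refine ⟨h2, ?_, ?_, ?_⟩
  · intro a b hab
    have hval : ℓ - 1 - (a : ℕ) = ℓ - 1 - (b : ℕ) := congrArg Fin.val (hinj hab)
    have h1 := a.isLt
    have h1' := b.isLt
    exact Fin.ext (by omega)
  · rw [← hrange]
    ext y
    constructor
    · rintro ⟨a, rfl⟩; exact Set.mem_range_self _
    · rintro ⟨t, rfl⟩
      refine ⟨⟨ℓ - 1 - (t : ℕ), by have := t.isLt; omega⟩, ?_⟩
      simp only
      congr 1
      exact Fin.ext (by simp only; have := t.isLt; omega)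
  · intro a b
    rw [hadj]
    have ha := a.isLt
    have hb := b.isLt
    constructor
    · rintro (hc | hc) <;> simp only [Fin.val_mk] at hc <;> omega
    · rintro (hc | hc) <;> simp only [Fin.val_mk] <;> omega

lemma PS.eq_of_start_eq (h : PS G C ℓ v) (h' : PS G C ℓ' v')
    (h0 : v' ⟨0, by have := h'.1; omega⟩ = v ⟨0, by have := h.1; omega⟩) :
    ∀ k (hk : k < ℓ) (hk' : k < ℓ'), v' ⟨k, hk'⟩ = v ⟨k, hk⟩ := by
  intro k
  induction k using Nat.strong_induction_on with
  | _ k ih =>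
    intro hk hk'
    match k, hk, hk' with
    | 0, hk, hk' => exact h0
    | (j+1), hk, hk' =>
      have hj : j < ℓ := by omega
      have hj' : j < ℓ' := by omega
      have hadj : G.Adj (v' ⟨j, hj'⟩) (v' ⟨j+1, hk'⟩) :=
        (h'.2.2.2 _ _).2 (Or.inl rfl)
      rw [ih j (by omega) hj hj'] at hadj
      have hmem : v' ⟨j+1, hk'⟩ ∈ Set.range v := by
        rw [h.2.2.1]; exact h'.mk_eq _
      obtain ⟨t, ht⟩ := hmem
      rw [← ht] at hadj
      rcases (h.2.2.2 _ _).1 hadj with h1 | h1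
      · rw [← ht]; congr 1; exact Fin.ext (by simpa using h1.symm)
      · simp only [Fin.val_mk] at h1
        exfalso
        have hjpos : 1 ≤ j := by omega
        have htj : (t : ℕ) = j - 1 := by omega
        have hvt : v t = v' ⟨j-1, by omega⟩ := by
          rw [ih (j-1) (by omega) (by omega) (by omega)]
          congr 1
          exact Fin.ext (by simpa using htj)
        rw [hvt] at ht
        have := h'.2.1 ht
        have := congrArg Fin.val this
        simp only [Fin.val_mk] at this
        omega

lemma PS.start_cases (h : PS G C ℓ v) (h' : PS G C ℓ' v') :
    v' ⟨0, by have := h'.1; omega⟩ = v ⟨0, by have := h.1; omega⟩ ∨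
      v' ⟨0, by have := h'.1; omega⟩ = v ⟨ℓ - 1, by have := h.1; omega⟩ := by
  have hmem : v' ⟨0, by have := h'.1; omega⟩ ∈ Set.range v := by
    rw [h.2.2.1]; exact h'.mk_eq _
  obtain ⟨t, ht⟩ := hmem
  by_cases h0 : (t : ℕ) = 0
  · left; rw [← ht]; congr 1; exact Fin.ext (by simpa using h0)
  by_cases hl : (t : ℕ) = ℓ - 1
  · right; rw [← ht]; congr 1; exact Fin.ext (by simpa using hl)
  exfalso
  have htlt := t.isLt
  have h2 := h.1
  set t1 : Fin ℓ := ⟨(t : ℕ) - 1, by omega⟩ with ht1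
  set t2 : Fin ℓ := ⟨(t : ℕ) + 1, by omega⟩ with ht2
  have adj1 : G.Adj (v t1) (v t) := (h.2.2.2 _ _).2 (Or.inl (by simp [ht1]; omega))
  have adj2 : G.Adj (v t2) (v t) := (h.2.2.2 _ _).2 (Or.inr (by simp [ht2]))
  rw [ht] at adj1 adj2
  have hm1 : v t1 ∈ Set.range v' := by rw [h'.2.2.1]; exact h.mk_eq _
  have hm2 : v t2 ∈ Set.range v' := by rw [h'.2.2.1]; exact h.mk_eq _
  obtain ⟨s1, hs1⟩ := hm1
  obtain ⟨s2, hs2⟩ := hm2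
  rw [← hs1] at adj1
  rw [← hs2] at adj2
  have e1 := (h'.2.2.2 _ _).1 adj1
  have e2 := (h'.2.2.2 _ _).1 adj2
  simp only [Fin.val_mk] at e1 e2
  have : s1 = s2 := Fin.ext (by omega)
  rw [this, hs2] at hs1
  have := h.2.1 hs1
  have := congrArg Fin.val this
  simp only [ht1, ht2, Fin.val_mk] at this
  omega

end PG9

namespace PG9
open SimpleGraph Function

variable {n m : ℕ}

/-- Compositions of `n` into `m` parts, each at least 2. -/
abbrev CompT (n m : ℕ) := {c : Fin m → ℕ // (∀ i, 2 ≤ c i) ∧ ∑ i, c i = n}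

noncomputable def eE (γ : CompT n m) : (Σ i : Fin m, Fin (γ.1 i)) ≃ Fin n :=
  (Fintype.equivFin _).trans (finCongr (by rw [Fintype.card_sigma]; simpa using γ.2.2))

noncomputable def Psi (γ : CompT n m) (σ : Equiv.Perm (Fin n)) :
    (Σ i : Fin m, Fin (γ.1 i)) ≃ Fin n :=
  (eE γ).trans σ

/-- The graph on `Fin n` which is a disjoint union of `m` paths of lengths `γ`, arranged
according to `σ`. -/
noncomputable def FG (γ : CompT n m) (σ : Equiv.Perm (Fin n)) : SimpleGraph (Fin n) where
  Adj x y := ((Psi γ σ).symm x).1 = ((Psi γ σ).symm y).1 ∧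
    ((((Psi γ σ).symm x).2 : ℕ) + 1 = (((Psi γ σ).symm y).2 : ℕ) ∨
     (((Psi γ σ).symm y).2 : ℕ) + 1 = (((Psi γ σ).symm x).2 : ℕ))
  symm := ⟨by rintro x y ⟨h1, h2⟩; exact ⟨h1.symm, h2.symm⟩⟩
  loopless := ⟨by rintro x ⟨h1, h2 | h2⟩ <;> omega⟩

lemma FG_adj_psi {γ : CompT n m} {σ : Equiv.Perm (Fin n)} (x y : Σ i : Fin m, Fin (γ.1 i)) :
    (FG γ σ).Adj (Psi γ σ x) (Psi γ σ y) ↔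
      x.1 = y.1 ∧ ((x.2 : ℕ) + 1 = (y.2 : ℕ) ∨ (y.2 : ℕ) + 1 = (x.2 : ℕ)) := by
  have hx : (Psi γ σ).symm ((Psi γ σ) x) = x := Equiv.symm_apply_apply _ _
  have hy : (Psi γ σ).symm ((Psi γ σ) y) = y := Equiv.symm_apply_apply _ _
  show (_ ∧ _) ↔ _
  rw [hx, hy]

def zi (γ : CompT n m) (i : Fin m) : Fin (γ.1 i) := ⟨0, by have := γ.2.1 i; omega⟩

lemma FG_reach_fst {γ : CompT n m} {σ : Equiv.Perm (Fin n)} {a b : Fin n} (h : (FG γ σ).Reachable a b) :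
    ((Psi γ σ).symm a).1 = ((Psi γ σ).symm b).1 := by
  obtain ⟨w⟩ := h
  induction w with
  | nil => rfl
  | cons hadj _ ih => exact hadj.1.trans ih

lemma FG_reach_step {γ : CompT n m} {σ : Equiv.Perm (Fin n)} (i : Fin m) : ∀ (k : ℕ) (hk : k < γ.1 i),
    (FG γ σ).Reachable (Psi γ σ ⟨i, zi γ i⟩) (Psi γ σ ⟨i, ⟨k, hk⟩⟩) := by
  intro k
  induction k with
  | zero => intro hk; exact SimpleGraph.Reachable.refl (Psi γ σ ⟨i, ⟨0, hk⟩⟩)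
  | succ k ih =>
    intro hk
    refine (ih (by omega)).trans (SimpleGraph.Adj.reachable ?_)
    rw [FG_adj_psi]
    exact ⟨rfl, Or.inl rfl⟩

lemma FG_reach_psi {γ : CompT n m} {σ : Equiv.Perm (Fin n)} (x y : Σ i : Fin m, Fin (γ.1 i)) :
    (FG γ σ).Reachable (Psi γ σ x) (Psi γ σ y) ↔ x.1 = y.1 := by
  constructor
  · intro h
    have := FG_reach_fst h
    simpa using this
  · obtain ⟨i, a⟩ := x
    obtain ⟨j, b⟩ := y
    intro h
    cases h
    exact (FG_reach_step i a.1 a.2).symm.trans (FG_reach_step i b.1 b.2)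

lemma FG_mk_psi {γ : CompT n m} {σ : Equiv.Perm (Fin n)} (x y : Σ i : Fin m, Fin (γ.1 i)) :
    (FG γ σ).connectedComponentMk (Psi γ σ x) = (FG γ σ).connectedComponentMk (Psi γ σ y)
      ↔ x.1 = y.1 := by
  rw [SimpleGraph.ConnectedComponent.eq]; exact FG_reach_psi x y

noncomputable def compIdx (γ : CompT n m) (σ : Equiv.Perm (Fin n)) :
    Fin m ≃ (FG γ σ).ConnectedComponent :=
  Equiv.ofBijective (fun i => (FG γ σ).connectedComponentMk (Psi γ σ ⟨i, zi γ i⟩))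
    ⟨fun i j h => (FG_mk_psi _ _).1 h, by
      intro C
      obtain ⟨x, rfl⟩ := C.exists_rep
      refine ⟨((Psi γ σ).symm x).1, ?_⟩
      have h2 : (FG γ σ).connectedComponentMk
          (Psi γ σ ⟨((Psi γ σ).symm x).1, zi γ ((Psi γ σ).symm x).1⟩) =
          (FG γ σ).connectedComponentMk (Psi γ σ ((Psi γ σ).symm x)) :=
        (FG_mk_psi _ _).2 rfl
      rw [(Psi γ σ).apply_symm_apply x] at h2
      exact h2⟩

lemma compIdx_apply {γ : CompT n m} {σ : Equiv.Perm (Fin n)} (i : Fin m) :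
    compIdx γ σ i = (FG γ σ).connectedComponentMk (Psi γ σ ⟨i, zi γ i⟩) := rfl

lemma FG_PS {γ : CompT n m} {σ : Equiv.Perm (Fin n)} (i : Fin m) :
    PS (FG γ σ) (compIdx γ σ i) (γ.1 i) (fun a => Psi γ σ ⟨i, a⟩) := by
  refine ⟨γ.2.1 i, ?_, ?_, ?_⟩
  · intro a b hab
    have hs := (Psi γ σ).injective hab
    rw [Sigma.mk.inj_iff] at hs
    exact eq_of_heq hs.2
  · ext y
    simp only [Set.mem_range, SimpleGraph.ConnectedComponent.mem_supp_iff, compIdx_apply]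
    constructor
    · rintro ⟨a, rfl⟩
      exact (FG_mk_psi _ _).2 rfl
    · intro hy
      rw [← (Psi γ σ).apply_symm_apply y] at hy
      have hfst : ((Psi γ σ).symm y).1 = i := (FG_mk_psi _ _).1 hy
      rcases hs : (Psi γ σ).symm y with ⟨j, b⟩
      rw [hs] at hfst
      subst hfst
      exact ⟨b, by rw [← hs, Equiv.apply_symm_apply]⟩
  · intro a b
    rw [FG_adj_psi]
    simp

lemma pathsGraph_FG (γ : CompT n m) (σ : Equiv.Perm (Fin n)) : PathsGraph (FG γ σ) m := by
  constructor
  · have := Nat.card_congr (compIdx γ σ)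
    simpa using this.symm
  · intro C
    obtain ⟨i, rfl⟩ := (compIdx γ σ).surjective C
    exact ⟨γ.1 i, _, FG_PS i⟩

end PG9

namespace PG9
open SimpleGraph Function

variable {n m : ℕ}

section Build

variable {G : SimpleGraph (Fin n)} (e : Fin m ≃ G.ConnectedComponent)
  (ℓ : Fin m → ℕ) (v : ∀ i, Fin (ℓ i) → Fin n)
  (hPS : ∀ i, PS G (e i) (ℓ i) (v i))

include hPS

lemma build_bij : Function.Bijective (fun x : Σ i, Fin (ℓ i) => v x.1 x.2) := by
  constructor
  · rintro ⟨i, a⟩ ⟨j, b⟩ hab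
    simp only at hab
    have hij : e i = e j := by
      rw [← (hPS i).mk_eq a, ← (hPS j).mk_eq b, hab]
    obtain rfl : i = j := e.injective hij
    have : a = b := (hPS i).2.1 hab
    rw [this]
  · intro x
    have hx : x ∈ (e (e.symm (G.connectedComponentMk x))).supp := by
      rw [e.apply_symm_apply]
      exact rfl
    rw [← (hPS (e.symm (G.connectedComponentMk x))).2.2.1] at hx
    obtain ⟨a, ha⟩ := hx
    exact ⟨⟨e.symm (G.connectedComponentMk x), a⟩, ha⟩

lemma build_sum : ∑ i, ℓ i = n := by
  have h := Nat.card_congr (Equiv.ofBijective _ (build_bij e ℓ v hPS))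
  simpa [Nat.card_eq_fintype_card, Fintype.card_sigma] using h

def buildγ : CompT n m := ⟨ℓ, fun i => (hPS i).1, build_sum e ℓ v hPS⟩

noncomputable def buildσ : Equiv.Perm (Fin n) :=
  (eE (buildγ e ℓ v hPS)).symm.trans (Equiv.ofBijective _ (build_bij e ℓ v hPS))

lemma build_psi (x : Σ i, Fin ((buildγ e ℓ v hPS).1 i)) :
    Psi (buildγ e ℓ v hPS) (buildσ e ℓ v hPS) x = v x.1 x.2 := by
  simp only [Psi, buildσ, Equiv.trans_apply, Equiv.symm_apply_apply]
  rfl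

lemma build_FG : FG (buildγ e ℓ v hPS) (buildσ e ℓ v hPS) = G := by
  ext x y
  rw [← Equiv.apply_symm_apply (Psi (buildγ e ℓ v hPS) (buildσ e ℓ v hPS)) x,
    ← Equiv.apply_symm_apply (Psi (buildγ e ℓ v hPS) (buildσ e ℓ v hPS)) y]
  rcases hx : (Psi (buildγ e ℓ v hPS) (buildσ e ℓ v hPS)).symm x with ⟨i, a⟩
  rcases hy : (Psi (buildγ e ℓ v hPS) (buildσ e ℓ v hPS)).symm y with ⟨j, b⟩
  rw [FG_adj_psi, build_psi, build_psi]
  by_cases hij : i = j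
  · subst hij
    rw [(hPS i).2.2.2 a b]
    simp
  · constructor
    · rintro ⟨h1, -⟩; exact absurd h1 hij
    · intro hadj
      exfalso
      have h1 : e i = e j := by
        rw [← (hPS i).mk_eq a, ← (hPS j).mk_eq b]
        exact SimpleGraph.ConnectedComponent.sound hadj.reachable
      exact hij (e.injective h1)

end Build

end PG9

namespace PG9
open SimpleGraph Function

variable {n m : ℕ}

lemma mk_psi_eq_iff' {γ : CompT n m} {σ : Equiv.Perm (Fin n)} {G : SimpleGraph (Fin n)}
    (hp : FG γ σ = G) (x y : Σ i : Fin m, Fin (γ.1 i)) :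
    G.connectedComponentMk (Psi γ σ x) = G.connectedComponentMk (Psi γ σ y) ↔ x.1 = y.1 := by
  subst hp; exact FG_mk_psi x y

lemma PS_of_FG_eq {γ : CompT n m} {σ : Equiv.Perm (Fin n)} {G : SimpleGraph (Fin n)}
    (hp : FG γ σ = G) (i : Fin m) :
    PS G (G.connectedComponentMk (Psi γ σ ⟨i, zi γ i⟩)) (γ.1 i) (fun a => Psi γ σ ⟨i, a⟩) := by
  subst hp
  rw [← compIdx_apply]
  exact FG_PS i

lemma ePfun_bij {γ : CompT n m} {σ : Equiv.Perm (Fin n)} {G : SimpleGraph (Fin n)}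
    (hp : FG γ σ = G) :
    Function.Bijective (fun i : Fin m => G.connectedComponentMk (Psi γ σ ⟨i, zi γ i⟩)) := by
  subst hp
  exact (compIdx γ σ).bijective

lemma card_fiber (G : SimpleGraph (Fin n)) (hG : PathsGraph G m) :
    Nat.card {p : CompT n m × Equiv.Perm (Fin n) // FG p.1 p.2 = G} =
      m.factorial * 2 ^ m := by
  classical
  obtain ⟨hcard, hpath⟩ := hG
  choose cL cw hcPS0 using fun C => hpath C
  have hcPS : ∀ C, PS G C (cL C) (cw C) := hcPS0
  set start : G.ConnectedComponent → Fin n :=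
    (fun C => cw C ⟨0, by have := (hcPS C).1; omega⟩) with hstart
  set lastv : G.ConnectedComponent → Fin n :=
    (fun C => cw C ⟨cL C - 1, by have := (hcPS C).1; omega⟩) with hlastv
  have hsl : ∀ C, start C ≠ lastv C := by
    intro C hC
    rw [hstart, hlastv] at hC
    have h2 := (hcPS C).2.1 hC
    have hval := congrArg Fin.val h2
    simp only [Fin.val_mk] at hval
    have := (hcPS C).1
    omega
  set Fib := {p : CompT n m × Equiv.Perm (Fin n) // FG p.1 p.2 = G} with hFib
  set Φ : Fib → (Fin m ≃ G.ConnectedComponent) × (Fin m → Bool) := (fun p =>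
    ⟨Equiv.ofBijective _ (ePfun_bij p.2),
     fun i => decide (Psi p.1.1 p.1.2 ⟨i, zi p.1.1 i⟩
        = start (G.connectedComponentMk (Psi p.1.1 p.1.2 ⟨i, zi p.1.1 i⟩)))⟩) with hΦ
  have hinj : Function.Injective Φ := by
    rintro ⟨⟨γ, σ⟩, hp⟩ ⟨⟨γ', σ'⟩, hq⟩ h
    rw [hΦ] at h
    simp only [Prod.mk.injEq] at h
    obtain ⟨he, hb⟩ := h
    have heF : ∀ i : Fin m, G.connectedComponentMk (Psi γ σ ⟨i, zi γ i⟩)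
        = G.connectedComponentMk (Psi γ' σ' ⟨i, zi γ' i⟩) := by
      intro i
      exact congrFun (congrArg (fun E : Fin m ≃ G.ConnectedComponent => (E : Fin m → _)) he) i
    have hlen : ∀ i, γ.1 i = γ'.1 i := by
      intro i
      rw [(PS_of_FG_eq hp i).len, (PS_of_FG_eq hq i).len, heF i]
    have hγ : γ = γ' := Subtype.ext (funext hlen)
    subst hγ
    have hb' : ∀ i : Fin m,
        decide (Psi γ σ ⟨i, zi γ i⟩
          = start (G.connectedComponentMk (Psi γ σ ⟨i, zi γ i⟩)))
        = decide (Psi γ σ' ⟨i, zi γ i⟩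
          = start (G.connectedComponentMk (Psi γ σ ⟨i, zi γ i⟩))) := by
      intro i
      have h0 := congrFun hb i
      rw [← heF i] at h0
      exact h0
    have hΨeq : ∀ x : Σ i : Fin m, Fin (γ.1 i), Psi γ σ x = Psi γ σ' x := by
      rintro ⟨i, a⟩
      have P1 := PS_of_FG_eq hp i
      have P2 := PS_of_FG_eq hq i
      rw [← heF i] at P2
      have hs : Psi γ σ' ⟨i, zi γ i⟩ = Psi γ σ ⟨i, zi γ i⟩ := by
        by_cases h1 : Psi γ σ ⟨i, zi γ i⟩
            = start (G.connectedComponentMk (Psi γ σ ⟨i, zi γ i⟩))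
        · have h2 : Psi γ σ' ⟨i, zi γ i⟩
              = start (G.connectedComponentMk (Psi γ σ ⟨i, zi γ i⟩)) := by
            have h3 := hb' i
            rw [decide_eq_true h1] at h3
            exact of_decide_eq_true h3.symm
          exact h2.trans h1.symm
        · have h2 : ¬ (Psi γ σ' ⟨i, zi γ i⟩
              = start (G.connectedComponentMk (Psi γ σ ⟨i, zi γ i⟩))) := by
            intro hx
            have h3 := hb' i
            rw [decide_eq_true hx] at h3
            exact h1 (of_decide_eq_true h3)
          rcases PS.start_cases (hcPS (G.connectedComponentMk (Psi γ σ ⟨i, zi γ i⟩))) P1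
            with hA | hA
          · exact absurd (show Psi γ σ ⟨i, zi γ i⟩
              = start (G.connectedComponentMk (Psi γ σ ⟨i, zi γ i⟩)) by
                rw [hstart]; exact hA) h1
          · rcases PS.start_cases (hcPS (G.connectedComponentMk (Psi γ σ ⟨i, zi γ i⟩))) P2
              with hB | hB
            · exact absurd (show Psi γ σ' ⟨i, zi γ i⟩
                = start (G.connectedComponentMk (Psi γ σ ⟨i, zi γ i⟩)) by
                  rw [hstart]; exact hB) h2
            · exact hB.trans hA.symm
      have key := PS.eq_of_start_eq P1 P2 hs a.1 a.2 a.2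
      exact (key).symm
    have hσ : σ = σ' := by
      apply Equiv.ext
      intro x
      have h1 : Psi γ σ ((eE γ).symm x) = Psi γ σ' ((eE γ).symm x) := hΨeq _
      simpa [Psi, Equiv.trans_apply, Equiv.apply_symm_apply] using h1
    apply Subtype.ext
    dsimp only
    rw [hσ]
  have hsurj : Function.Surjective Φ := by
    rintro ⟨E, b⟩
    set vb : ∀ i : Fin m, Fin (cL (E i)) → Fin n :=
      (fun i => if b i then cw (E i)
        else fun a => cw (E i) ⟨cL (E i) - 1 - (a : ℕ), by have := a.isLt; omega⟩) with hvb
    have hPSb : ∀ i, PS G (E i) (cL (E i)) (vb i) := by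
      intro i
      rw [hvb]
      by_cases hbi : b i = true
      · simp only [hbi, if_true]
        exact hcPS (E i)
      · rw [Bool.not_eq_true] at hbi
        simp only [hbi, Bool.false_eq_true, if_false]
        exact (hcPS (E i)).rev
    have hvstart : ∀ (i : Fin m) (a : Fin (cL (E i))), (a : ℕ) = 0 →
        vb i a = if b i then start (E i) else lastv (E i) := by
      intro i a h0
      rw [hvb, hstart, hlastv]
      by_cases hbi : b i = true
      · simp only [hbi, if_true]
        congr 1
        exact Fin.ext (by simpa using h0)
      · rw [Bool.not_eq_true] at hbi
        simp only [hbi, Bool.false_eq_true, if_false]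
        congr 1
        exact Fin.ext (by simp [h0])
    refine ⟨⟨⟨buildγ E (fun i => cL (E i)) vb hPSb, buildσ E (fun i => cL (E i)) vb hPSb⟩,
      build_FG E (fun i => cL (E i)) vb hPSb⟩, ?_⟩
    have hfst : ∀ i : Fin m, G.connectedComponentMk
        (Psi (buildγ E (fun i => cL (E i)) vb hPSb) (buildσ E (fun i => cL (E i)) vb hPSb)
          ⟨i, zi (buildγ E (fun i => cL (E i)) vb hPSb) i⟩) = E i := by
      intro i
      rw [build_psi]
      exact (hPSb i).mk_eq (zi (buildγ E (fun i => cL (E i)) vb hPSb) i)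
    rw [hΦ]
    refine Prod.ext ?_ ?_
    · apply Equiv.ext
      intro i
      exact hfst i
    · funext i
      show decide _ = b i
      rw [hfst i, build_psi]
      dsimp only
      rw [hvstart i (zi (buildγ E (fun i => cL (E i)) vb hPSb) i) rfl]
      by_cases hbi : b i = true
      · rw [hbi]
        simp
      · rw [Bool.not_eq_true] at hbi
        rw [hbi]
        simp only [Bool.false_eq_true, if_false]
        exact decide_eq_false (fun hx => hsl (E i) hx.symm)
  have hcongr := Nat.card_congr (Equiv.ofBijective Φ ⟨hinj, hsurj⟩)
  rw [hcongr]
  haveI : Fintype G.ConnectedComponent := Fintype.ofFinite _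
  have hm : Fintype.card G.ConnectedComponent = m := by
    rw [← Nat.card_eq_fintype_card]; exact hcard
  have eqv : Fin m ≃ G.ConnectedComponent := (Fintype.equivFinOfCardEq hm).symm
  rw [Nat.card_prod, Nat.card_eq_fintype_card, Nat.card_eq_fintype_card,
    Fintype.card_equiv eqv, Fintype.card_fun]
  simp

end PG9

namespace PG9
open SimpleGraph Function

variable {n m : ℕ}

instance finite_sb (m N : ℕ) : Finite {d : Fin m → ℕ // ∑ i, d i = N} := by
  apply Finite.of_injective (fun d : {d : Fin m → ℕ // ∑ i, d i = N} =>
    (fun i => (⟨d.1 i, by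
      have hle : d.1 i ≤ ∑ j, d.1 j :=
        Finset.single_le_sum (fun j _ => Nat.zero_le (d.1 j)) (Finset.mem_univ i)
      rw [d.2] at hle; omega⟩ : Fin (N+1))))
  intro d d' h
  apply Subtype.ext
  funext i
  exact congrArg Fin.val (congrFun h i)

lemma card_sb (m N : ℕ) : Nat.card {d : Fin m → ℕ // ∑ i, d i = N} = (N + m - 1).choose N := by
  induction m generalizing N with
  | zero =>
    cases N with
    | zero =>
      haveI : Unique {d : Fin 0 → ℕ // ∑ i, d i = 0} :=
        ⟨⟨⟨fun i => i.elim0, by simp⟩⟩, fun d => Subtype.ext (funext fun i => i.elim0)⟩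
      simp [Nat.card_unique]
    | succ N =>
      haveI : IsEmpty {d : Fin 0 → ℕ // ∑ i, d i = N+1} := ⟨by rintro ⟨d, hd⟩; simp at hd⟩
      rw [Nat.card_of_isEmpty]
      have h1 : N + 1 + 0 - 1 = N := by omega
      rw [h1]
      exact (Nat.choose_eq_zero_of_lt (by omega)).symm
  | succ m ih =>
    classical
    set X := {d : Fin (m+1) → ℕ // ∑ i, d i = N} with hX
    set g : X → Fin (N+1) := fun d => ⟨d.1 0, by
      have hle : d.1 0 ≤ ∑ j, d.1 j :=
        Finset.single_le_sum (fun j _ => Nat.zero_le (d.1 j)) (Finset.mem_univ 0)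
      rw [d.2] at hle; omega⟩ with hg
    have e1 : (Σ k : Fin (N+1), {x : X // g x = k}) ≃ X := Equiv.sigmaFiberEquiv g
    have e2 : ∀ k : Fin (N+1),
        {x : X // g x = k} ≃ {d : Fin m → ℕ // ∑ i, d i = N - (k : ℕ)} := by
      intro k
      have hkN : (k : ℕ) ≤ N := by have := k.isLt; omega
      refine ⟨fun x => ⟨fun i => x.1.1 i.succ, ?_⟩,
        fun d => ⟨⟨Fin.cons (k : ℕ) d.1, ?_⟩, ?_⟩, ?_, ?_⟩
      · show ∑ i : Fin m, x.1.1 i.succ = N - (k : ℕ)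
        have hsum := x.1.2
        rw [Fin.sum_univ_succ] at hsum
        have hk0 : x.1.1 0 = (k : ℕ) := congrArg Fin.val x.2
        omega
      · show ∑ i : Fin (m+1), (Fin.cons (k : ℕ) d.1 : Fin (m+1) → ℕ) i = N
        rw [Fin.sum_univ_succ]
        simp only [Fin.cons_zero, Fin.cons_succ]
        rw [d.2]
        omega
      · exact Fin.ext (by
          show (Fin.cons (k : ℕ) d.1 : Fin (m+1) → ℕ) 0 = (k : ℕ)
          simp)
      · intro x
        apply Subtype.ext
        apply Subtype.ext
        funext j
        refine Fin.cases ?_ ?_ j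
        · have hk0 : x.1.1 0 = (k : ℕ) := congrArg Fin.val x.2
          simpa using hk0.symm
        · intro j
          simp
      · intro d
        apply Subtype.ext
        funext i
        simp
    haveI : Finite X := finite_sb (m+1) N
    haveI : ∀ k : Fin (N+1), Fintype {x : X // g x = k} := fun k => Fintype.ofFinite _
    have hc1 : Nat.card X = Nat.card (Σ k : Fin (N+1), {x : X // g x = k}) :=
      (Nat.card_congr e1).symm
    rw [hc1, Nat.card_eq_fintype_card, Fintype.card_sigma]
    have hfib : ∀ k : Fin (N+1),
        Fintype.card {x : X // g x = k} = (N - (k : ℕ) + m - 1).choose (N - (k : ℕ)) := by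
      intro k
      rw [← Nat.card_eq_fintype_card, Nat.card_congr (e2 k), ih]
    rw [Finset.sum_congr rfl (fun k _ => hfib k)]
    rw [Fin.sum_univ_eq_sum_range (fun k => (N - k + m - 1).choose (N - k)) (N+1)]
    rw [← Finset.sum_range_reflect]
    have hre : ∀ j ∈ Finset.range (N+1),
        (N - (N + 1 - 1 - j) + m - 1).choose (N - (N + 1 - 1 - j)) = (j + m - 1).choose j := by
      intro j hj
      rw [Finset.mem_range] at hj
      have h1 : N - (N + 1 - 1 - j) = j := by omega
      rw [h1]
    rw [Finset.sum_congr rfl hre]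
    rcases Nat.eq_zero_or_pos m with hm0 | hm0
    · subst hm0
      have hz : ∀ j ∈ Finset.range (N+1), j ≠ 0 → (j + 0 - 1).choose j = 0 := by
        intro j _ hj
        exact Nat.choose_eq_zero_of_lt (by omega)
      rw [Finset.sum_eq_single 0 hz (by intro h; simp at h)]
      simp
    · have hstep : ∀ j ∈ Finset.range (N+1),
          (j + m - 1).choose j = (j + (m-1)).choose (m-1) := by
        intro j _
        have h1 : j + m - 1 = j + (m - 1) := by omega
        rw [h1]
        have h2 := Nat.choose_symm (show j ≤ j + (m-1) by omega)
        have h3 : j + (m-1) - j = m - 1 := by omega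
        rw [h3] at h2
        exact h2.symm
      rw [Finset.sum_congr rfl hstep]
      rw [Nat.sum_range_add_choose N (m-1)]
      have h4 : N + (m-1) + 1 = N + m := by omega
      have h5 : m - 1 + 1 = m := by omega
      rw [h4, h5]
      have h6 : N + (m+1) - 1 = N + m := by omega
      rw [h6]
      have h7 := Nat.choose_symm (show m ≤ N + m by omega)
      have h8 : N + m - m = N := by omega
      rw [h8] at h7
      exact h7.symm

lemma card_compT (hm : 1 ≤ m) (hmn : 2*m ≤ n) :
    Nat.card (CompT n m) = (n - m - 1).choose (m - 1) := by
  classical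
  have hsum2 : ∑ _i : Fin m, (2:ℕ) = 2*m := by
    simp [Finset.sum_const, Finset.card_univ, mul_comm]
  have e : CompT n m ≃ {d : Fin m → ℕ // ∑ i, d i = n - 2*m} :=
    { toFun := fun c => ⟨fun i => c.1 i - 2, by
        show ∑ i : Fin m, (c.1 i - 2) = n - 2*m
        have hs := c.2.2
        have h1 : ∑ i, (c.1 i - 2 + 2) = ∑ i, c.1 i :=
          Finset.sum_congr rfl (fun i _ => by have := c.2.1 i; omega)
        rw [Finset.sum_add_distrib, hsum2, hs] at h1
        omega⟩
      invFun := fun d => ⟨fun i => d.1 i + 2, fun i => by show 2 ≤ d.1 i + 2; omega, by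
        show ∑ i : Fin m, (d.1 i + 2) = n
        rw [Finset.sum_add_distrib, hsum2, d.2]
        omega⟩
      left_inv := fun c => Subtype.ext (funext fun i => by
        show c.1 i - 2 + 2 = c.1 i
        have := c.2.1 i; omega)
      right_inv := fun d => Subtype.ext (funext fun i => by
        show d.1 i + 2 - 2 = d.1 i
        omega) }
  rw [Nat.card_congr e, card_sb]
  have h1 : n - 2*m + m - 1 = n - m - 1 := by omega
  rw [h1]
  have h2 := Nat.choose_symm (show n - 2*m ≤ n - m - 1 by omega)
  have h3 : n - m - 1 - (n - 2*m) = m - 1 := by omega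
  rw [h3] at h2
  exact h2.symm

end PG9

namespace PG9
open SimpleGraph Function

variable {n m : ℕ}

instance finite_compT : Finite (CompT n m) := by
  apply Finite.of_injective (fun c : CompT n m =>
    (fun i => (⟨c.1 i, by
      have hle : c.1 i ≤ ∑ j, c.1 j :=
        Finset.single_le_sum (fun j _ => Nat.zero_le (c.1 j)) (Finset.mem_univ i)
      rw [c.2.2] at hle; omega⟩ : Fin (n+1))))
  intro c c' h
  apply Subtype.ext
  funext i
  exact congrArg Fin.val (congrFun h i)

lemma main_count (n m : ℕ) :
    Nat.card (CompT n m) * n.factorial =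
      Nat.card {G : SimpleGraph (Fin n) // PathsGraph G m} * (m.factorial * 2 ^ m) := by
  classical
  set S := {G : SimpleGraph (Fin n) // PathsGraph G m} with hS
  set F' : CompT n m × Equiv.Perm (Fin n) → S :=
    (fun p => ⟨FG p.1 p.2, pathsGraph_FG p.1 p.2⟩) with hF'
  have e1 : (Σ s : S, {p // F' p = s}) ≃ CompT n m × Equiv.Perm (Fin n) :=
    Equiv.sigmaFiberEquiv F'
  have e2 : ∀ s : S, {p // F' p = s} ≃
      {p : CompT n m × Equiv.Perm (Fin n) // FG p.1 p.2 = s.1} := by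
    intro s
    apply Equiv.subtypeEquivRight
    intro p
    constructor
    · intro h
      rw [hF'] at h
      exact congrArg Subtype.val h
    · intro h
      exact Subtype.ext h
  haveI : Fintype S := Fintype.ofFinite _
  haveI : ∀ s : S, Fintype {p // F' p = s} := fun s => Fintype.ofFinite _
  have h1 : Nat.card (CompT n m) * Nat.card (Equiv.Perm (Fin n)) =
      ∑ s : S, Nat.card {p // F' p = s} := by
    rw [← Nat.card_prod, ← Nat.card_congr e1, Nat.card_eq_fintype_card, Fintype.card_sigma]
    exact Finset.sum_congr rfl (fun s _ => (Nat.card_eq_fintype_card).symm)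
  have h2 : ∀ s : S, Nat.card {p // F' p = s} = m.factorial * 2^m := by
    intro s
    rw [Nat.card_congr (e2 s)]
    exact card_fiber s.1 s.2
  have h3 : Nat.card (Equiv.Perm (Fin n)) = n.factorial := by
    rw [Nat.card_eq_fintype_card, Fintype.card_perm, Fintype.card_fin]
  rw [← h3, h1, Finset.sum_congr rfl (fun s _ => h2 s), Finset.sum_const, smul_eq_mul,
    Finset.card_univ, Nat.card_eq_fintype_card]

end PG9

/-- The number of simple graphs on `{1,…,n}` with exactly `m` components, each a path on
at least 2 vertices, equals `C(n−m−1, m−1) · n!/(m!·2^m)`. -/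
theorem stmt9 (n m : ℕ) (hm : 1 ≤ m) (hmn : 2 * m ≤ n) :
    (Nat.card {G : SimpleGraph (Fin n) // PathsGraph G m} : ℚ) =
      ((n - m - 1).choose (m - 1) : ℚ) * (n.factorial : ℚ) /
        ((m.factorial : ℚ) * 2 ^ m) := by
  have key := PG9.main_count n m
  rw [PG9.card_compT hm hmn] at key
  have hpos : ((m.factorial : ℚ) * 2 ^ m) ≠ 0 := by positivity
  rw [eq_div_iff hpos]
  have hcast := congrArg (Nat.cast : ℕ → ℚ) key.symm
  push_cast at hcast ⊢
  linarith
end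

section
/- Fix 0 < δ < δ′ < 1 and α > 0. There exists K such that for all integers n, all k ≥ K, and all m, the following holds: if S is a collection of m vertex-disjoint paths on n vertices in total that is δ-normal (with respect to k), and S′ is any subcollection of the paths of S with |S′| = m′ ≥ m − n·k^{−α}, then S′ is δ′-normal (with respect to k). -/
open Finset Filter

lemma tele_aux (T : ℕ) (hT : 2 ≤ T) : ∀ N, T ≤ N →
    ∑ ℓ ∈ Finset.Ico T N, ((ℓ:ℝ)^3)⁻¹ ≤ ((T:ℝ)-1)⁻¹ - ((N:ℝ)-1)⁻¹ := by
  intro N hN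
  induction N, hN using Nat.le_induction with
  | base => simp
  | succ N hTN ih =>
    rw [Finset.sum_Ico_succ_top hTN]
    have hN2 : (2:ℝ) ≤ N := by exact_mod_cast hT.trans hTN
    have key : ((N:ℝ)^3)⁻¹ ≤ ((N:ℝ)-1)⁻¹ - (N:ℝ)⁻¹ := by
      rw [inv_sub_inv (by linarith) (by linarith),
        show (N:ℝ) - ((N:ℝ)-1) = 1 by ring, one_div]
      apply inv_anti₀ (by nlinarith) (by nlinarith [mul_le_mul_of_nonneg_left hN2 (by positivity : (0:ℝ) ≤ (N:ℝ)^2)])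
    have := ih
    push_cast
    push_cast at this
    have he : ((N:ℝ) + 1 - 1) = (N:ℝ) := by ring
    rw [he]
    linarith

lemma tele (T : ℕ) (hT : 2 ≤ T) (N : ℕ) : ∑ ℓ ∈ Finset.Ico T N, ((ℓ:ℝ)^3)⁻¹ ≤ 1 := by
  rcases le_or_gt T N with h | h
  · have := tele_aux T hT N h
    have hT1 : (1:ℝ) ≤ (T:ℝ) - 1 := by
      have : (2:ℝ) ≤ T := by exact_mod_cast hT
      linarith
    have hN1 : (0:ℝ) < (N:ℝ) - 1 := by
      have : (2:ℝ) ≤ N := by exact_mod_cast hT.trans h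
      linarith
    have h2 : ((T:ℝ)-1)⁻¹ ≤ 1 := inv_le_one_of_one_le₀ hT1
    have h3 : (0:ℝ) ≤ ((N:ℝ)-1)⁻¹ := by positivity
    linarith
  · rw [Finset.Ico_eq_empty (by omega)]
    norm_num

/-- A finite indexed collection of paths (given by its multiset of path lengths
`x j`, `j ∈ s`) is `δ`-normal with respect to `k`: with `p_ℓ` the fraction of paths of
length `ℓ`, `M = (1/8)·log log k`, `ε_ℓ(δ) = (ℓ⁴(2−δ)^ℓ (log k)^{1/8})⁻¹` and
`γ_ℓ(δ) = (ℓ⁴(2−δ)^ℓ)⁻¹`, we require `p₁ = 0`, `|p_ℓ − 2^{1−ℓ}| ≤ ε_ℓ(δ)` for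
`2 ≤ ℓ ≤ M`, and `p_ℓ ≤ γ_ℓ(δ)` for `ℓ ≥ M`. -/
def DeltaNormal (k : ℕ) (δ : ℝ) {ι : Type*} (s : Finset ι) (x : ι → ℕ) : Prop :=
  let p : ℕ → ℝ := fun ℓ => ((s.filter fun j => x j = ℓ).card : ℝ) / s.card
  p 1 = 0 ∧
  (∀ ℓ : ℕ, 2 ≤ ℓ → (ℓ : ℝ) ≤ Real.log (Real.log k) / 8 →
    |p ℓ - (2 : ℝ) ^ (1 - (ℓ : ℤ))| ≤
      ((ℓ : ℝ) ^ 4 * (2 - δ) ^ ℓ * Real.log k ^ ((1 : ℝ) / 8))⁻¹) ∧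
  (∀ ℓ : ℕ, Real.log (Real.log k) / 8 ≤ (ℓ : ℝ) →
    p ℓ ≤ ((ℓ : ℝ) ^ 4 * (2 - δ) ^ ℓ)⁻¹)

set_option maxHeartbeats 1000000 in
/-- For fixed `0 < δ < δ′ < 1` and `α > 0`, there is `K` such that for all `k ≥ K`:
any subcollection of at least `m − n·k^{−α}` of the paths of a `δ`-normal collection of
`m` vertex-disjoint paths on `n` vertices in total is `δ′`-normal. -/
theorem stmt11 (δ δ' α : ℝ) (hδ : 0 < δ) (hδδ' : δ < δ') (hδ'1 : δ' < 1) (hα : 0 < α) :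
    ∃ K : ℕ, ∀ (n k : ℕ), K ≤ k → ∀ (m : ℕ) (x : Fin m → ℕ),
      (∀ j, 1 ≤ x j) → (∑ j, x j = n) →
      DeltaNormal k δ (Finset.univ : Finset (Fin m)) x →
      ∀ A : Finset (Fin m), (m : ℝ) - (n : ℝ) * (k : ℝ) ^ (-α) ≤ (A.card : ℝ) →
        DeltaNormal k δ' A x := by
  classical
  have h2δ : 1 < 2 - δ := by linarith
  have h2δ' : 1 < 2 - δ' := by linarith
  have hba : 2 - δ' < 2 - δ := by linarith
  have h2δpos : (0:ℝ) < 2 - δ := by linarith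
  set r : ℝ := (2 - δ') / (2 - δ) with hrdef
  have hr0 : 0 < r := by positivity
  have hr1 : r < 1 := (div_lt_one h2δpos).mpr hba
  set c₀ : ℝ := 1 - r with hc₀def
  have hc₀ : 0 < c₀ := by rw [hc₀def]; linarith
  have hc₀1 : c₀ ≤ 1 := by rw [hc₀def]; linarith
  -- eventual conditions
  have hev : ∀ᶠ k : ℕ in atTop, 2 ≤ k ∧ 16 ≤ Real.log (Real.log k) ∧
      (Real.log k)^6 ≤ (c₀/10) * (k:ℝ)^α := by
    have h1 : ∀ᶠ k : ℕ in atTop, 2 ≤ k := eventually_ge_atTop 2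
    have h2 : Filter.Tendsto (fun k : ℕ => Real.log (Real.log k)) atTop atTop :=
      (Real.tendsto_log_atTop.comp Real.tendsto_log_atTop).comp tendsto_natCast_atTop_atTop
    have h2' : ∀ᶠ k : ℕ in atTop, 16 ≤ Real.log (Real.log k) := h2.eventually_ge_atTop 16
    have h3 : (fun x : ℝ => Real.log x ^ (6:ℝ)) =o[atTop] fun x => x ^ α :=
      isLittleO_log_rpow_rpow_atTop 6 hα
    have h4 : ∀ᶠ x : ℝ in atTop, ‖Real.log x ^ (6:ℝ)‖ ≤ (c₀/10) * ‖x ^ α‖ :=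
      h3.bound (by positivity)
    have h5 : ∀ᶠ k : ℕ in atTop, (Real.log k)^6 ≤ (c₀/10) * (k:ℝ)^α := by
      filter_upwards [tendsto_natCast_atTop_atTop.eventually h4,
        tendsto_natCast_atTop_atTop.eventually (eventually_ge_atTop (1:ℝ))] with k hk hk1
      have hlog : 0 ≤ Real.log k := Real.log_nonneg hk1
      have hrp : (0:ℝ) ≤ (k:ℝ)^α := by positivity
      rw [Real.norm_eq_abs, Real.norm_eq_abs, abs_of_nonneg (by positivity),
        abs_of_nonneg hrp] at hk
      calc (Real.log k)^6 = Real.log k ^ (6:ℝ) := by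
            rw [← Real.rpow_natCast (Real.log k) 6]; norm_num
        _ ≤ (c₀/10) * (k:ℝ)^α := hk
    filter_upwards [h1, h2', h5] with k a b c
    exact ⟨a, b, c⟩
  obtain ⟨K, hK⟩ := eventually_atTop.mp hev
  refine ⟨K, fun n k hk m x hx1 hsum hS A hA => ?_⟩
  obtain ⟨hk2, hM16, hpoly⟩ := hK k hk
  obtain ⟨h1, h2, h3⟩ := hS
  set L := Real.log k with hLdef
  have hk1 : (1:ℝ) < (k:ℝ) := by exact_mod_cast hk2
  have hLpos : 0 < L := Real.log_pos hk1
  have hLe : Real.exp 16 ≤ L := (Real.le_log_iff_exp_le hLpos).mp hM16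
  have hL16 : (16:ℝ) ≤ L := le_trans (by linarith only [Real.add_one_le_exp (16:ℝ)]) hLe
  set M : ℝ := Real.log L / 8 with hMdef
  have hM2 : (2:ℝ) ≤ M := by rw [hMdef]; linarith
  have hM0 : (0:ℝ) ≤ M := by linarith
  have hM8 : M ≤ (L-1)/8 := by
    have := Real.log_le_sub_one_of_pos hLpos
    rw [hMdef]; linarith
  have hML : M ≤ L := by linarith
  have hL8 : (1:ℝ) ≤ L ^ ((1:ℝ)/8) := Real.one_le_rpow (by linarith) (by norm_num)
  have hL4 : (1:ℝ) ≤ L ^ ((1:ℝ)/4) := Real.one_le_rpow (by linarith) (by norm_num)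
  set η : ℝ := c₀ / (2 * M^4 * L ^ ((1:ℝ)/4)) with hηdef
  have hden : (0:ℝ) < 2 * M^4 * L ^ ((1:ℝ)/4) := by positivity
  have hηpos : 0 < η := by positivity
  have hM4 : (16:ℝ) ≤ M^4 := by
    calc (16:ℝ) = 2^4 := by norm_num
      _ ≤ M^4 := pow_le_pow_left₀ (by norm_num) hM2 4
  have hden32 : (32:ℝ) ≤ 2 * M^4 * L ^ ((1:ℝ)/4) := by
    have h16 : (16:ℝ)*1 ≤ M^4 * L ^ ((1:ℝ)/4) :=
      mul_le_mul hM4 hL4 (by norm_num) (by positivity)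
    linarith only [h16]
  have hη2 : η ≤ 1/32 := by
    rw [hηdef]
    exact div_le_div₀ (by norm_num) hc₀1 (by norm_num) hden32
  have hη12 : η ≤ 1/2 := by linarith
  have hηc₀ : η ≤ c₀ := by
    rw [hηdef]
    apply div_le_self hc₀.le
    linarith only [hden32]
  -- m must be positive
  rcases Nat.eq_zero_or_pos m with hm0 | hm0
  · exfalso
    subst hm0
    have h22 := h2 2 le_rfl (by norm_num; linarith only [hM2])
    simp only [Finset.univ_eq_empty, Finset.filter_empty, Finset.card_empty,
      Nat.cast_zero, zero_div, zero_sub, abs_neg] at h22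
    have hv : |(2:ℝ) ^ (1 - ((2:ℕ):ℤ))| = 1/2 := by norm_num
    rw [hv] at h22
    have hb1 : (1:ℝ) ≤ (2-δ)^2 := by nlinarith only [h2δ]
    have hd16 : (16:ℝ) ≤ ((2:ℕ):ℝ)^4 * (2-δ)^2 * L ^ ((1:ℝ)/8) := by
      push_cast
      have hq : (1:ℝ)*1 ≤ (2-δ)^2 * L ^ ((1:ℝ)/8) :=
        mul_le_mul hb1 hL8 (by norm_num) (by positivity)
      nlinarith only [hq]
    have : (((2:ℕ):ℝ)^4 * (2-δ)^2 * L ^ ((1:ℝ)/8))⁻¹ ≤ 1/16 := by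
      rw [show (1:ℝ)/16 = ((16:ℝ))⁻¹ by norm_num]
      apply inv_anti₀ (by norm_num) hd16
    linarith
  have hmR : (0:ℝ) < m := by exact_mod_cast hm0
  -- threshold T and the bound n ≤ (T+1) m
  set T : ℕ := ⌈M⌉₊ + 2 with hTdef
  have hT2 : 2 ≤ T := by omega
  have hMT : M ≤ (T:ℝ) := by
    have := Nat.le_ceil M
    rw [hTdef]; push_cast; linarith
  have hTM3 : (T:ℝ) ≤ M + 3 := by
    have := Nat.ceil_lt_add_one hM0
    rw [hTdef]; push_cast; linarith
  have hcardbd : ∀ ℓ : ℕ, M ≤ (ℓ:ℝ) →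
      (((Finset.univ.filter fun j => x j = ℓ).card : ℝ)) ≤ (m:ℝ) * (((ℓ:ℝ))^4)⁻¹ := by
    intro ℓ hℓ
    have h3ℓ := h3 ℓ hℓ
    simp only [Finset.card_univ, Fintype.card_fin] at h3ℓ
    have hℓ2 : (2:ℝ) ≤ (ℓ:ℝ) := le_trans hM2 hℓ
    have hℓpos : (0:ℝ) < (ℓ:ℝ)^4 := by positivity
    have hb1 : (1:ℝ) ≤ (2-δ)^ℓ := one_le_pow₀ h2δ.le
    have hi : ((ℓ:ℝ)^4 * (2-δ)^ℓ)⁻¹ ≤ ((ℓ:ℝ)^4)⁻¹ := by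
      apply inv_anti₀ hℓpos
      have := mul_le_mul_of_nonneg_left hb1 hℓpos.le
      linarith only [this]
    rw [div_le_iff₀ hmR] at h3ℓ
    calc ((Finset.univ.filter fun j => x j = ℓ).card : ℝ)
        ≤ ((ℓ:ℝ)^4 * (2-δ)^ℓ)⁻¹ * m := h3ℓ
      _ ≤ ((ℓ:ℝ)^4)⁻¹ * m := mul_le_mul_of_nonneg_right hi hmR.le
      _ = (m:ℝ) * ((ℓ:ℝ)^4)⁻¹ := by ring
  have hxn : ∀ j : Fin m, x j ≤ n := by
    intro j
    rw [← hsum]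
    exact Finset.single_le_sum (fun i _ => Nat.zero_le _) (Finset.mem_univ j)
  have hn : (n:ℝ) ≤ ((T:ℝ) + 1) * m := by
    have hsplit := (Finset.sum_filter_add_sum_filter_not Finset.univ (fun j => x j < T) x)
    have hs1 : ∑ j ∈ Finset.univ.filter (fun j => x j < T), x j ≤ T * m := by
      calc ∑ j ∈ Finset.univ.filter (fun j => x j < T), x j
          ≤ ∑ _j ∈ Finset.univ.filter (fun j => x j < T), T :=
            Finset.sum_le_sum (fun j hj => (Finset.mem_filter.mp hj).2.le)
        _ = (Finset.univ.filter (fun j => x j < T)).card * T := by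
            rw [Finset.sum_const, smul_eq_mul]
        _ ≤ m * T := by
            apply Nat.mul_le_mul_right
            calc (Finset.univ.filter (fun j => x j < T)).card
                ≤ Finset.univ.card := Finset.card_filter_le _ _
              _ = m := by simp
        _ = T * m := Nat.mul_comm _ _
    have hs2 : ((∑ j ∈ Finset.univ.filter (fun j => ¬ x j < T), x j : ℕ) : ℝ) ≤ m := by
      have hmaps : ∀ j ∈ Finset.univ.filter (fun j : Fin m => ¬ x j < T),
          x j ∈ Finset.Ico T (n+1) := by
        intro j hj
        rw [Finset.mem_filter] at hj
        exact Finset.mem_Ico.mpr ⟨Nat.not_lt.mp hj.2, Nat.lt_succ_of_le (hxn j)⟩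
      have hfib := Finset.sum_fiberwise_of_maps_to hmaps x
      rw [← hfib]
      push_cast
      have hterm : ∀ ℓ ∈ Finset.Ico T (n+1),
          (∑ j ∈ (Finset.univ.filter (fun j : Fin m => ¬ x j < T)).filter
              (fun j => x j = ℓ), (x j : ℝ))
            ≤ (m:ℝ) * (((ℓ:ℝ))^3)⁻¹ := by
        intro ℓ hℓ
        have hTℓ : T ≤ ℓ := (Finset.mem_Ico.mp hℓ).1
        have hMℓ : M ≤ (ℓ:ℝ) := le_trans hMT (by exact_mod_cast hTℓ)
        have hℓ2 : (2:ℝ) ≤ (ℓ:ℝ) := le_trans hM2 hMℓ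
        have hℓpos : (0:ℝ) < (ℓ:ℝ) := by linarith
        have hsum_eq : (∑ j ∈ (Finset.univ.filter (fun j : Fin m => ¬ x j < T)).filter
              (fun j => x j = ℓ), (x j : ℝ))
            = (((Finset.univ.filter (fun j : Fin m => ¬ x j < T)).filter
              (fun j => x j = ℓ)).card : ℝ) * ℓ := by
          rw [Finset.sum_congr rfl (fun j hj => by
            rw [(Finset.mem_filter.mp hj).2]), Finset.sum_const, nsmul_eq_mul]
        have hsub : ((Finset.univ.filter (fun j : Fin m => ¬ x j < T)).filter
              (fun j => x j = ℓ)).card ≤ (Finset.univ.filter fun j => x j = ℓ).card := by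
          apply Finset.card_le_card
          intro j hj
          rw [Finset.mem_filter] at hj ⊢
          exact ⟨Finset.mem_univ j, hj.2⟩
        have hc := hcardbd ℓ hMℓ
        have hcc : (((Finset.univ.filter (fun j : Fin m => ¬ x j < T)).filter
              (fun j => x j = ℓ)).card : ℝ) ≤ (m:ℝ) * (((ℓ:ℝ))^4)⁻¹ :=
          le_trans (by exact_mod_cast hsub) hc
        rw [hsum_eq]
        calc (((Finset.univ.filter (fun j : Fin m => ¬ x j < T)).filter
              (fun j => x j = ℓ)).card : ℝ) * ℓ
            ≤ ((m:ℝ) * (((ℓ:ℝ))^4)⁻¹) * ℓ := mul_le_mul_of_nonneg_right hcc hℓpos.le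
          _ = (m:ℝ) * (((ℓ:ℝ))^3)⁻¹ := by
              field_simp
      calc ∑ ℓ ∈ Finset.Ico T (n+1), ∑ j ∈ (Finset.univ.filter
              (fun j : Fin m => ¬ x j < T)).filter (fun j => x j = ℓ), (x j : ℝ)
          ≤ ∑ ℓ ∈ Finset.Ico T (n+1), (m:ℝ) * (((ℓ:ℝ))^3)⁻¹ :=
            Finset.sum_le_sum hterm
        _ = (m:ℝ) * ∑ ℓ ∈ Finset.Ico T (n+1), (((ℓ:ℝ))^3)⁻¹ := by
            rw [Finset.mul_sum]
        _ ≤ (m:ℝ) * 1 := mul_le_mul_of_nonneg_left (tele T hT2 (n+1)) hmR.le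
        _ = m := mul_one _
    have heq : (n:ℝ) = ((∑ j ∈ Finset.univ.filter (fun j : Fin m => x j < T), x j : ℕ) : ℝ)
        + ((∑ j ∈ Finset.univ.filter (fun j : Fin m => ¬ x j < T), x j : ℕ) : ℝ) := by
      rw [← Nat.cast_add]
      norm_cast
      rw [hsplit, hsum]
    have hs1R : ((∑ j ∈ Finset.univ.filter (fun j : Fin m => x j < T), x j : ℕ) : ℝ)
        ≤ (T:ℝ) * m := by exact_mod_cast hs1
    rw [heq]
    linarith
  -- deficiency bound
  have hkpos : (0:ℝ) < (k:ℝ) := by linarith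
  have hka : (0:ℝ) < (k:ℝ)^α := Real.rpow_pos_of_pos hkpos α
  have hCk : ((T:ℝ)+1) * (k:ℝ)^(-α) ≤ η := by
    rw [Real.rpow_neg hkpos.le, hηdef, ← div_eq_mul_inv, div_le_div_iff₀ hka hden]
    have hL4L : L ^ ((1:ℝ)/4) ≤ L := by
      calc L ^ ((1:ℝ)/4) ≤ L ^ (1:ℝ) :=
            Real.rpow_le_rpow_of_exponent_le (by linarith) (by norm_num)
        _ = L := Real.rpow_one L
    have hM4L : M^4 ≤ L^4 := pow_le_pow_left₀ hM0 hML 4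
    have hT1L : (T:ℝ) + 1 ≤ L := by linarith only [hTM3, hM8, hL16]
    have einner : 2*M^4*L ^ ((1:ℝ)/4) ≤ 2*(L^4*L) := by
      have hmm := mul_le_mul hM4L hL4L (by positivity) (by positivity)
      linarith
    have e1 : ((T:ℝ)+1) * (2*M^4*L ^ ((1:ℝ)/4)) ≤ L * (2*(L^4*L)) :=
      mul_le_mul hT1L einner (by positivity) hLpos.le
    have e2 : L * (2*(L^4*L)) = 2*L^6 := by ring
    have e3 : 2*L^6 ≤ (c₀/5) * (k:ℝ)^α := by linarith only [hpoly]
    have e4 : (c₀/5) * (k:ℝ)^α ≤ c₀ * (k:ℝ)^α :=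
      mul_le_mul_of_nonneg_right (div_le_self hc₀.le (by norm_num)) hka.le
    linarith only [e1, e2, e3, e4]
  have hd : (m:ℝ) - A.card ≤ η * m := by
    have hstep : (n:ℝ) * (k:ℝ)^(-α) ≤ (((T:ℝ)+1) * (k:ℝ)^(-α)) * m := by
      have hkan : (0:ℝ) ≤ (k:ℝ)^(-α) := by positivity
      calc (n:ℝ) * (k:ℝ)^(-α) ≤ (((T:ℝ)+1) * m) * (k:ℝ)^(-α) :=
            mul_le_mul_of_nonneg_right hn hkan
        _ = (((T:ℝ)+1) * (k:ℝ)^(-α)) * m := by ring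
    have hstep2 : (((T:ℝ)+1) * (k:ℝ)^(-α)) * m ≤ η * m :=
      mul_le_mul_of_nonneg_right hCk hmR.le
    linarith
  have hm'R : (1 - η) * m ≤ (A.card:ℝ) := by linarith only [hd]
  have h12m : (1:ℝ)/2 * m ≤ (1-η)*m :=
    mul_le_mul_of_nonneg_right (by linarith only [hη12]) hmR.le
  have hApos : (0:ℝ) < (A.card:ℝ) := by linarith only [h12m, hm'R, hmR]
  have hm2A : (m:ℝ) ≤ 2*(A.card:ℝ) := by linarith only [h12m, hm'R]
  have hAm : (A.card:ℝ) ≤ m := by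
    have : A.card ≤ m := by
      calc A.card ≤ Finset.univ.card := Finset.card_le_card (Finset.subset_univ A)
        _ = m := by simp
    exact_mod_cast this
  have hAmN : A.card ≤ m := by exact_mod_cast hAm
  -- counting facts
  have hsubc : ∀ ℓ : ℕ, (A.filter fun j => x j = ℓ).card
      ≤ (Finset.univ.filter fun j => x j = ℓ).card :=
    fun ℓ => Finset.card_le_card (Finset.filter_subset_filter _ (Finset.subset_univ A))
  have hlowc : ∀ ℓ : ℕ, (Finset.univ.filter fun j => x j = ℓ).card
      ≤ (A.filter fun j => x j = ℓ).card + (m - A.card) := by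
    intro ℓ
    have hsub2 : (Finset.univ.filter fun j => x j = ℓ)
        ⊆ (A.filter fun j => x j = ℓ) ∪ (Finset.univ \ A) := by
      intro j hj
      rw [Finset.mem_filter] at hj
      by_cases hjA : j ∈ A
      · exact Finset.mem_union_left _ (Finset.mem_filter.mpr ⟨hjA, hj.2⟩)
      · exact Finset.mem_union_right _ (Finset.mem_sdiff.mpr ⟨Finset.mem_univ j, hjA⟩)
    calc (Finset.univ.filter fun j => x j = ℓ).card
        ≤ ((A.filter fun j => x j = ℓ) ∪ (Finset.univ \ A)).card :=
          Finset.card_le_card hsub2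
      _ ≤ (A.filter fun j => x j = ℓ).card + (Finset.univ \ A).card :=
          Finset.card_union_le _ _
      _ = (A.filter fun j => x j = ℓ).card + (m - A.card) := by
          rw [Finset.card_sdiff_of_subset (Finset.subset_univ A)]
          simp
  have hcmub : ∀ ℓ : ℕ, ((Finset.univ.filter fun j => x j = ℓ).card : ℝ) ≤ m := by
    intro ℓ
    have : (Finset.univ.filter fun j => x j = ℓ).card ≤ m := by
      calc (Finset.univ.filter fun j => x j = ℓ).card
          ≤ Finset.univ.card := Finset.card_filter_le _ _
        _ = m := by simp
    exact_mod_cast this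
  have hclose : ∀ ℓ : ℕ, |((A.filter fun j => x j = ℓ).card : ℝ)/A.card
      - ((Finset.univ.filter fun j => x j = ℓ).card : ℝ)/m| ≤ 2*η := by
    intro ℓ
    set c' : ℝ := ((A.filter fun j => x j = ℓ).card : ℝ) with hc'
    set c : ℝ := ((Finset.univ.filter fun j => x j = ℓ).card : ℝ) with hc
    have hc'0 : 0 ≤ c' := by positivity
    have hc'c : c' ≤ c := by rw [hc', hc]; exact_mod_cast hsubc ℓ
    have hcm : c ≤ m := hcmub ℓ
    have hc0 : 0 ≤ c := by positivity
    have hclow : c ≤ c' + ((m:ℝ) - A.card) := by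
      have h' := hlowc ℓ
      have h'' : c ≤ c' + (((m - A.card : ℕ)):ℝ) := by
        rw [hc', hc]; exact_mod_cast h'
      rwa [Nat.cast_sub hAmN] at h''
    rw [abs_sub_le_iff]
    constructor
    · rw [div_sub_div _ _ hApos.ne' hmR.ne', div_le_iff₀ (by positivity)]
      have e1 : c * ((m:ℝ) - A.card) ≤ (m:ℝ) * (η*m) :=
        mul_le_mul hcm hd (by linarith only [hAm]) hmR.le
      have e2 : η*m*m ≤ η*m*(2*(A.card:ℝ)) :=
        mul_le_mul_of_nonneg_left hm2A (by positivity)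
      have e0 : c' * (m:ℝ) ≤ c * m := mul_le_mul_of_nonneg_right hc'c hmR.le
      nlinarith only [e0, e1, e2]
    · rw [div_sub_div _ _ hmR.ne' hApos.ne', div_le_iff₀ (by positivity)]
      have f1 : c * (A.card:ℝ) ≤ c * m := mul_le_mul_of_nonneg_left hAm hc0
      have f2 : c * (m:ℝ) ≤ (c' + ((m:ℝ) - A.card)) * m :=
        mul_le_mul_of_nonneg_right hclow hmR.le
      have e5 : ((m:ℝ) - A.card) * m ≤ (η*m) * m :=
        mul_le_mul_of_nonneg_right hd hmR.le
      have e2 : η*m*m ≤ η*m*(2*(A.card:ℝ)) :=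
        mul_le_mul_of_nonneg_left hm2A (by positivity)
      nlinarith only [f1, f2, e5, e2]
  refine ⟨?_, fun ℓ hℓ2 hℓM => ?_, fun ℓ hMℓ => ?_⟩
  · -- p' 1 = 0
    have h1' := h1
    simp only [Finset.card_univ, Fintype.card_fin] at h1'
    rw [div_eq_zero_iff] at h1'
    have hc1 : ((Finset.univ.filter fun j => x j = 1).card : ℝ) = 0 := by
      rcases h1' with h | h
      · exact h
      · exact absurd h hmR.ne'
    have hc1N : (Finset.univ.filter fun j => x j = 1).card = 0 := by exact_mod_cast hc1
    have : (A.filter fun j => x j = 1).card = 0 :=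
      Nat.le_zero.mp (hc1N ▸ hsubc 1)
    simp [this]
  · -- middle range
    have h2ℓ := h2 ℓ hℓ2 hℓM
    simp only [Finset.card_univ, Fintype.card_fin] at h2ℓ
    have hcl := hclose ℓ
    have hℓ1 : 1 ≤ ℓ := by omega
    have hℓR : (2:ℝ) ≤ (ℓ:ℝ) := by exact_mod_cast hℓ2
    set aa : ℝ := (2 - δ')^ℓ with haa
    set bb : ℝ := (2 - δ)^ℓ with hbb
    have haapos : 0 < aa := pow_pos (by linarith) ℓ
    have hbbpos : 0 < bb := pow_pos (by linarith) ℓ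
    have habr : aa = r^ℓ * bb := by
      rw [haa, hbb, show (2 - δ') = r * (2 - δ) by rw [hrdef, div_mul_cancel₀ _ h2δpos.ne'], mul_pow]
    have hab : aa ≤ r * bb := by
      rw [habr]
      have : r^ℓ ≤ r := by
        calc r^ℓ ≤ r^1 := pow_le_pow_of_le_one hr0.le hr1.le hℓ1
          _ = r := pow_one r
      exact mul_le_mul_of_nonneg_right this hbbpos.le
    set X : ℝ := (ℓ:ℝ)^4 * aa * L ^ ((1:ℝ)/8) with hX
    set Y : ℝ := (ℓ:ℝ)^4 * bb * L ^ ((1:ℝ)/8) with hY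
    have hℓpos : (0:ℝ) < (ℓ:ℝ) := by linarith
    have hXpos : 0 < X := by rw [hX]; positivity
    have hYpos : 0 < Y := by rw [hY]; positivity
    have hxy : Y⁻¹ ≤ r * X⁻¹ := by
      rw [show r * X⁻¹ = (X / r)⁻¹ by rw [inv_div]; ring]
      apply inv_anti₀ (by positivity)
      rw [div_le_iff₀ hr0]
      calc X = (ℓ:ℝ)^4 * aa * L ^ ((1:ℝ)/8) := hX
        _ ≤ (ℓ:ℝ)^4 * (r * bb) * L ^ ((1:ℝ)/8) := by
            apply mul_le_mul_of_nonneg_right _ (by positivity)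
            exact mul_le_mul_of_nonneg_left hab (by positivity)
        _ = Y * r := by rw [hY]; ring
    have hc₀X : c₀ * X⁻¹ ≤ X⁻¹ - Y⁻¹ := by
      have e : c₀ * X⁻¹ = X⁻¹ - r * X⁻¹ := by rw [hc₀def]; ring
      linarith
    have hXle : X ≤ M^4 * L ^ ((1:ℝ)/4) := by
      have h4 : (ℓ:ℝ)^4 ≤ M^4 := pow_le_pow_left₀ (by positivity) hℓM 4
      have haL : aa ≤ L ^ ((1:ℝ)/8) := by
        have h2l : aa ≤ (2:ℝ)^ℓ := by
          rw [haa]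
          exact pow_le_pow_left₀ (by linarith) (by linarith) ℓ
        have h2M : (2:ℝ)^ℓ ≤ L ^ ((1:ℝ)/8) := by
          rw [← Real.rpow_natCast (2:ℝ) ℓ,
            Real.rpow_def_of_pos (by norm_num : (0:ℝ) < 2),
            Real.rpow_def_of_pos hLpos]
          apply Real.exp_le_exp.mpr
          have hlog2 : Real.log 2 ≤ 1 := by
            have := Real.log_two_lt_d9
            linarith
          have hlog20 : 0 ≤ Real.log 2 := Real.log_nonneg (by norm_num)
          have hℓM8 : (ℓ:ℝ) ≤ Real.log L / 8 := by rw [← hMdef]; exact hℓM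
          have hlogL0 : (0:ℝ) ≤ Real.log L := by
            rw [hMdef] at hM2; linarith
          have hp : (ℓ:ℝ) * Real.log 2 ≤ (ℓ:ℝ) * 1 :=
            mul_le_mul_of_nonneg_left hlog2 (by linarith only [hℓR])
          linarith only [hp, hℓM8]
        linarith
      calc X = (ℓ:ℝ)^4 * aa * L ^ ((1:ℝ)/8) := hX
        _ ≤ M^4 * (L ^ ((1:ℝ)/8)) * L ^ ((1:ℝ)/8) := by
            apply mul_le_mul _ le_rfl (by positivity) (by positivity)
            exact mul_le_mul h4 haL haapos.le (by positivity)
        _ = M^4 * L ^ ((1:ℝ)/4) := by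
            rw [mul_assoc, ← Real.rpow_add hLpos]; norm_num
    have hXinv : 2*η ≤ c₀ * X⁻¹ := by
      have hi : (M^4 * L ^ ((1:ℝ)/4))⁻¹ ≤ X⁻¹ := inv_anti₀ hXpos hXle
      have he : 2*η = c₀ * (M^4 * L ^ ((1:ℝ)/4))⁻¹ := by
        rw [hηdef]
        field_simp
      rw [he]
      exact mul_le_mul_of_nonneg_left hi hc₀.le
    calc |((A.filter fun j => x j = ℓ).card : ℝ)/A.card - (2:ℝ) ^ (1 - (ℓ:ℤ))|
        ≤ |((A.filter fun j => x j = ℓ).card : ℝ)/A.card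
            - ((Finset.univ.filter fun j => x j = ℓ).card : ℝ)/m|
          + |((Finset.univ.filter fun j => x j = ℓ).card : ℝ)/m - (2:ℝ) ^ (1 - (ℓ:ℤ))| :=
          abs_sub_le _ _ _
      _ ≤ 2*η + Y⁻¹ := add_le_add hcl h2ℓ
      _ ≤ X⁻¹ := by linarith
  · -- tail range
    have h3ℓ := h3 ℓ hMℓ
    simp only [Finset.card_univ, Fintype.card_fin] at h3ℓ
    have hℓR : (2:ℝ) ≤ (ℓ:ℝ) := le_trans hM2 hMℓ
    have hℓ2 : 2 ≤ ℓ := by exact_mod_cast hℓR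
    set aa : ℝ := (2 - δ')^ℓ with haa
    set bb : ℝ := (2 - δ)^ℓ with hbb
    have haapos : 0 < aa := pow_pos (by linarith) ℓ
    have hbbpos : 0 < bb := pow_pos (by linarith) ℓ
    have hℓpos : (0:ℝ) < (ℓ:ℝ) := by linarith
    have habr : aa = r^ℓ * bb := by
      rw [haa, hbb, show (2 - δ') = r * (2 - δ) by rw [hrdef, div_mul_cancel₀ _ h2δpos.ne'], mul_pow]
    have har2 : aa ≤ r^2 * bb := by
      rw [habr]
      exact mul_le_mul_of_nonneg_right
        (pow_le_pow_of_le_one hr0.le hr1.le hℓ2) hbbpos.le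
    have hrr : r*r ≤ r*1 := mul_le_mul_of_nonneg_left hr1.le hr0.le
    have hr2 : r^2 ≤ 1 - η := by nlinarith only [hrr, hηc₀, hc₀def]
    have h1η : (0:ℝ) < 1 - η := by linarith
    have hc'c : ((A.filter fun j => x j = ℓ).card : ℝ)
        ≤ ((Finset.univ.filter fun j => x j = ℓ).card : ℝ) := by exact_mod_cast hsubc ℓ
    have step1 : ((A.filter fun j => x j = ℓ).card : ℝ)/A.card
        ≤ ((Finset.univ.filter fun j => x j = ℓ).card : ℝ)/((1-η)*m) :=
      div_le_div₀ (by positivity) hc'c (by positivity) hm'R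
    have step2 : ((Finset.univ.filter fun j => x j = ℓ).card : ℝ)/((1-η)*m)
        = (((Finset.univ.filter fun j => x j = ℓ).card : ℝ)/m) / (1-η) := by
      rw [div_div]
      ring_nf
    have step3 : (((Finset.univ.filter fun j => x j = ℓ).card : ℝ)/m) / (1-η)
        ≤ ((ℓ:ℝ)^4 * bb)⁻¹ / (1-η) := by gcongr
    have key : ((ℓ:ℝ)^4 * bb)⁻¹ / (1-η) ≤ ((ℓ:ℝ)^4 * aa)⁻¹ := by
      rw [div_le_iff₀ h1η,
        show ((ℓ:ℝ)^4 * aa)⁻¹ * (1-η) = (((ℓ:ℝ)^4 * aa) / (1-η))⁻¹ by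
          rw [inv_div]; ring]
      apply inv_anti₀ (by positivity)
      rw [div_le_iff₀ h1η]
      have hab1 : r^2*bb ≤ (1-η) * bb := mul_le_mul_of_nonneg_right hr2 hbbpos.le
      have hab2 : aa ≤ (1-η) * bb := le_trans har2 hab1
      have hab3 := mul_le_mul_of_nonneg_left hab2 (by positivity : (0:ℝ) ≤ (ℓ:ℝ)^4)
      nlinarith only [hab3]
    calc ((A.filter fun j => x j = ℓ).card : ℝ)/A.card
        ≤ ((Finset.univ.filter fun j => x j = ℓ).card : ℝ)/((1-η)*m) := step1
      _ = (((Finset.univ.filter fun j => x j = ℓ).card : ℝ)/m) / (1-η) := step2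
      _ ≤ ((ℓ:ℝ)^4 * bb)⁻¹ / (1-η) := step3
      _ ≤ ((ℓ:ℝ)^4 * aa)⁻¹ := key
end
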